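/- Let Q_n(x) be the descent polynomial over permutations of the multiset {1,1,...,n,n,n+1}, P_n(x) the descent polynomial over permutations of {1,1,...,n,n}, and R_n(x) = (1+(2n-1)x) P_n(x) + x(1-x) P_n'(x). Then Q_n(x) = R_n(x) + x P_n(x), and moreover x·P_n(x) = Σ x^{des(σ)} over those permutations σ of {1,1,...,n,n,n+1} with σ_1 = n+1, while R_n(x) = Σ x^{des(σ)} over those with σ_1 < n+1. -/

import Mathlib

open Polynomial

/-- Number of descents of a word. -/
def des (l : List ℤ) : ℕ := ((l.zip l.tail).filter (fun p => p.2 < p.1)).length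

/-- Type-B descents: prepend 0. -/
def desB (l : List ℤ) : ℕ := des (0 :: l)

/-- The multiset {1,1,2,2,...,n,n} as a list. -/
def baseList (n : ℕ) : List ℤ := (List.range n).flatMap (fun i => [(i : ℤ) + 1, (i : ℤ) + 1])

/-- All distinct arrangements (multiset permutations) of a list. -/
def arrangements (l : List ℤ) : List (List ℤ) := l.permutations.dedup

/-- Descent polynomial over arrangements of `l`. -/
noncomputable def desPoly (l : List ℤ) : Polynomial ℝ :=
  ((arrangements l).map (fun w => (X : Polynomial ℝ) ^ des w)).sum

noncomputable def Ppoly (n : ℕ) : Polynomial ℝ := desPoly (baseList n)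

noncomputable def Qpoly (n : ℕ) : Polynomial ℝ := desPoly (baseList n ++ [(n : ℤ) + 1])

/-- All signings of a word. -/
def signings : List ℤ → List (List ℤ)
  | [] => [[]]
  | a :: t => (signings t).flatMap (fun w => [a :: w, (-a) :: w])

/-- All signed permutations of the multiset given by `l`. -/
def signedWords (l : List ℤ) : List (List ℤ) := (arrangements l).flatMap signings

noncomputable def SpolyB (n : ℕ) : Polynomial ℝ :=
  ((signedWords (baseList n)).map (fun w => (X : Polynomial ℝ) ^ desB w)).sum

/-- Signed permutations of {1,1,...,n,n,n+1} in which n+1 carries a plus sign. -/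
def Dwords (n : ℕ) : List (List ℤ) :=
  (signedWords (baseList n ++ [(n : ℤ) + 1])).filter (fun w => ((n : ℤ) + 1) ∈ w)

noncomputable def TpolyB (n : ℕ) : Polynomial ℝ :=
  ((Dwords n).map (fun w => (X : Polynomial ℝ) ^ desB w)).sum

def PcountZ (n : ℕ) (k : ℤ) : ℕ :=
  ((arrangements (baseList n)).filter (fun w => (des w : ℤ) = k)).length

def QcountN (n : ℕ) (k : ℕ) : ℕ :=
  ((arrangements (baseList n ++ [(n : ℤ) + 1])).filter (fun w => des w = k)).length

def ScountZ (n : ℕ) (k : ℤ) : ℕ :=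
  ((signedWords (baseList n)).filter (fun w => (desB w : ℤ) = k)).length

def TcountZ (n : ℕ) (k : ℤ) : ℕ :=
  ((Dwords n).filter (fun w => (desB w : ℤ) = k)).length



/-! ### Auxiliary lemmas -/

lemma des_nil' : des ([] : List ℤ) = 0 := rfl

lemma des_single' (a : ℤ) : des [a] = 0 := rfl

lemma des_cons_cons (a b : ℤ) (t : List ℤ) :
    des (a :: b :: t) = (if b < a then 1 else 0) + des (b :: t) := by
  simp [des, List.filter_cons]
  split <;> simp [Nat.add_comm]

lemma des_cons_max (m : ℤ) (w : List ℤ) (hw : w ≠ []) (h : ∀ a ∈ w, a < m) :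
    des (m :: w) = des w + 1 := by
  obtain ⟨c, t, rfl⟩ := List.exists_cons_of_ne_nil hw
  rw [des_cons_cons]
  simp [h c (by simp), Nat.add_comm]

lemma perm_insertIdx (m : ℤ) : ∀ (w : List ℤ) (i : ℕ), i ≤ w.length →
    (w.insertIdx i m).Perm (m :: w)
  | w, 0, _ => by simp [List.insertIdx_zero]
  | a :: t, i + 1, h => by
      simpa [List.insertIdx_succ_cons] using
        ((perm_insertIdx m t i (by simpa using h)).cons a).trans (List.Perm.swap m a t)

lemma erase_insertIdx (m : ℤ) : ∀ (w : List ℤ) (i : ℕ), i ≤ w.length → m ∉ w →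
    (w.insertIdx i m).erase m = w
  | w, 0, _, _ => by simp [List.insertIdx_zero]
  | a :: t, i + 1, h, hm => by
      rw [List.insertIdx_succ_cons, List.erase_cons_tail,
        erase_insertIdx m t i (by simpa using h) (by simp at hm; exact hm.2)]
      simp at hm
      simp [hm.1]
      intro hc
      exact hm.1 hc.symm

lemma indexOf_insertIdx (m : ℤ) : ∀ (w : List ℤ) (i : ℕ), i ≤ w.length → m ∉ w →
    (w.insertIdx i m).idxOf m = i
  | w, 0, _, _ => by simp [List.insertIdx_zero]
  | a :: t, i + 1, h, hm => by
      simp at hm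
      rw [List.insertIdx_succ_cons, List.idxOf_cons_ne _ (by intro hc; exact hm.1 hc.symm),
        indexOf_insertIdx m t i (by simpa using h) hm.2]

lemma insertIdx_indexOf_erase (m : ℤ) : ∀ (v : List ℤ), m ∈ v →
    (v.erase m).insertIdx (v.idxOf m) m = v
  | a :: t, hm => by
      by_cases h : a = m
      · subst h; simp [List.insertIdx_zero]
      · have hmt : m ∈ t := by simpa [Ne.symm h] using hm
        rw [List.erase_cons_tail (by simp [h]),
          List.idxOf_cons_ne _ (by intro hc; exact h hc), List.insertIdx_succ_cons,
          insertIdx_indexOf_erase m t hmt]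

lemma insert_sum (m : ℤ) : ∀ (w : List ℤ), (∀ a ∈ w, a < m) →
    ∑ i ∈ Finset.range (w.length + 1), (X : Polynomial ℝ) ^ des (w.insertIdx i m)
      = ((des w : Polynomial ℝ) + 1) * X ^ des w
        + ((w.length : Polynomial ℝ) - (des w : Polynomial ℝ)) * X ^ (des w + 1)
  | [], _ => by simp [des_nil', des_single', List.insertIdx_zero]
  | [a], h => by
      have ha : a < m := h a (by simp)
      simp [Finset.sum_range_succ, List.insertIdx_zero, List.insertIdx_succ_cons,
        des_cons_cons, des_single', ha, not_lt.2 ha.le]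
      ring
  | a :: b :: t, h => by
      have ha : a < m := h a (by simp)
      have hb : b < m := h b (by simp)
      have hma : ¬ m < a := not_lt.2 ha.le
      have IH := insert_sum m (b :: t) (fun x hx => h x (List.mem_cons_of_mem a hx))
      set F : ℕ → Polynomial ℝ := fun i => (X : Polynomial ℝ) ^ des ((b :: t).insertIdx i m)
        with hF
      have hF0 : F 0 = X ^ (des (b :: t) + 1) := by
        simp only [hF, List.insertIdx_zero, des_cons_cons m b t, hb, if_pos, Nat.add_comm]
      have e1 : ∑ i ∈ Finset.range (t.length + 1), F (i + 1)
          = ((des (b :: t) : Polynomial ℝ) + 1) * X ^ des (b :: t)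
            + (((b :: t).length : Polynomial ℝ) - (des (b :: t) : Polynomial ℝ))
              * X ^ (des (b :: t) + 1)
            - X ^ (des (b :: t) + 1) := by
        rw [← IH]
        have := Finset.sum_range_succ' F (t.length + 1)
        simp only [List.length_cons] at *
        rw [this, hF0]
        ring
      rw [show (a :: b :: t).length + 1 = (t.length + 2) + 1 by simp,
        Finset.sum_range_succ']
      simp only [List.insertIdx_succ_cons, List.insertIdx_zero]
      rw [Finset.sum_range_succ']
      simp only [List.insertIdx_succ_cons, List.insertIdx_zero]
      have hterm : ∀ i ∈ Finset.range (t.length + 1),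
          (X : Polynomial ℝ) ^ des (a :: b :: t.insertIdx i m)
            = X ^ (if b < a then 1 else 0) * F (i + 1) := by
        intro i _
        simp only [hF, List.insertIdx_succ_cons, des_cons_cons a b (t.insertIdx i m), pow_add]
      rw [Finset.sum_congr rfl hterm, ← Finset.mul_sum, e1]
      have hz : des (a :: m :: b :: t) = des (b :: t) + 1 := by
        rw [des_cons_cons, des_cons_cons m b t]
        simp [hma, hb, Nat.add_comm]
      have hz2 : des (m :: a :: b :: t) = des (a :: b :: t) + 1 := by
        rw [des_cons_cons m a (b :: t)]
        simp [ha, Nat.add_comm]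
      rw [hz, hz2, des_cons_cons a b t]
      by_cases hab : b < a <;>
        simp only [hab, if_pos, if_neg, not_false_iff, List.length_cons] <;>
        push_cast <;> ring

lemma mem_arrangements {v l : List ℤ} : v ∈ arrangements l ↔ v.Perm l := by
  simp [arrangements, List.mem_dedup, List.mem_permutations]

lemma nodup_arrangements (l : List ℤ) : (arrangements l).Nodup := List.nodup_dedup _

lemma length_baseList (n : ℕ) : (baseList n).length = 2 * n := by
  induction n with
  | zero => rfl
  | succ k ih =>
      rw [baseList, List.range_succ]
      simp [List.flatMap_append]
      omega

lemma baseList_lt (n : ℕ) : ∀ a ∈ baseList n, a < (n : ℤ) + 1 := by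
  intro a ha
  simp only [baseList, List.mem_flatMap, List.mem_range, List.mem_cons,
    List.not_mem_nil, or_false, List.mem_singleton] at ha
  obtain ⟨i, hi, h⟩ := ha
  obtain ⟨j, hj, rfl⟩ : ∃ j < n, i = (j : ℤ) := by simpa using hi
  rcases h with h | h <;> omega

lemma per_term (n d : ℕ) :
    (1 + (2 * (n : Polynomial ℝ) - 1) * X) * X ^ d
        + X * (1 - X) * (Polynomial.C (d : ℝ) * X ^ (d - 1)) + X * X ^ d
      = ((d : Polynomial ℝ) + 1) * X ^ d
        + (2 * (n : Polynomial ℝ) - (d : Polynomial ℝ)) * X ^ (d + 1) := by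
  cases d with
  | zero => simp; ring
  | succ k =>
      simp only [Nat.add_sub_cancel, Polynomial.C_eq_natCast]
      push_cast
      ring

/-- Qₙ(x) = Rₙ(x) + x Pₙ(x), where Rₙ(x) = (1+(2n-1)x)Pₙ(x) + x(1-x)Pₙ'(x);
moreover x·Pₙ(x) is the descent polynomial over arrangements of {1,1,…,n,n,n+1}
whose first letter is n+1, and Rₙ(x) over those whose first letter is < n+1. -/
theorem stmt15 (n : ℕ) (hn : 1 ≤ n) :
    Qpoly n = ((1 + (2 * (n : Polynomial ℝ) - 1) * X) * Ppoly n
        + X * (1 - X) * derivative (Ppoly n)) + X * Ppoly n ∧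
    X * Ppoly n =
      (((arrangements (baseList n ++ [(n : ℤ) + 1])).filter
          (fun w => w.headI = (n : ℤ) + 1)).map
        (fun w => (X : Polynomial ℝ) ^ des w)).sum ∧
    (1 + (2 * (n : Polynomial ℝ) - 1) * X) * Ppoly n
        + X * (1 - X) * derivative (Ppoly n) =
      (((arrangements (baseList n ++ [(n : ℤ) + 1])).filter
          (fun w => w.headI < (n : ℤ) + 1)).map
        (fun w => (X : Polynomial ℝ) ^ des w)).sum := by

  classical
  set m : ℤ := (n : ℤ) + 1 with hm
  have hnm : ∀ a ∈ baseList n, a < m := baseList_lt n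
  have hlen : (baseList n).length = 2 * n := length_baseList n
  have hmnotin : m ∉ baseList n := fun h => lt_irrefl m (hnm m h)
  set W : Finset (List ℤ) := (arrangements (baseList n)).toFinset with hW
  set A : Finset (List ℤ) := (arrangements (baseList n ++ [m])).toFinset with hA
  have hWmem : ∀ w, w ∈ W ↔ w.Perm (baseList n) := by
    intro w; rw [hW, List.mem_toFinset, mem_arrangements]
  have hAmem : ∀ v, v ∈ A ↔ v.Perm (baseList n ++ [m]) := by
    intro v; rw [hA, List.mem_toFinset, mem_arrangements]
  have hP : Ppoly n = ∑ w ∈ W, (X : Polynomial ℝ) ^ des w :=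
    (List.sum_toFinset _ (nodup_arrangements _)).symm
  have hQ : Qpoly n = ∑ v ∈ A, (X : Polynomial ℝ) ^ des v :=
    (List.sum_toFinset _ (nodup_arrangements _)).symm
  -- the insertion bijection
  have hbij : ∑ v ∈ A, (X : Polynomial ℝ) ^ des v
      = ∑ p ∈ W ×ˢ Finset.range (2 * n + 1), (X : Polynomial ℝ) ^ des (p.1.insertIdx p.2 m) := by
    refine Finset.sum_nbij' (fun v => (v.erase m, v.idxOf m))
      (fun p => p.1.insertIdx p.2 m) ?_ ?_ ?_ ?_ ?_
    · intro v hv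
      have hperm : v.Perm (baseList n ++ [m]) := (hAmem v).1 hv
      have hmv : m ∈ v := hperm.mem_iff.2 (by simp)
      rw [Finset.mem_product]
      constructor
      · rw [hWmem]
        have := hperm.erase m
        rwa [List.erase_append_right _ hmnotin, List.erase_cons_head, List.append_nil] at this
      · rw [Finset.mem_range]
        have h1 : v.idxOf m < v.length := List.idxOf_lt_length_iff.2 hmv
        have h2 : v.length = 2 * n + 1 := by
          rw [hperm.length_eq, List.length_append, hlen]; simp
        omega
    · intro p hp
      rw [Finset.mem_product] at hp
      have hwp : p.1.Perm (baseList n) := (hWmem p.1).1 hp.1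
      have hlw : p.1.length = 2 * n := hwp.length_eq.trans hlen
      have hi : p.2 ≤ p.1.length := by
        have := Finset.mem_range.1 hp.2; omega
      rw [hAmem]
      exact ((perm_insertIdx m p.1 p.2 hi).trans (hwp.cons m)).trans
        (List.perm_append_singleton m (baseList n)).symm
    · intro v hv
      exact insertIdx_indexOf_erase m v
        (((hAmem v).1 hv).mem_iff.2 (by simp))
    · intro p hp
      rw [Finset.mem_product] at hp
      have hwp : p.1.Perm (baseList n) := (hWmem p.1).1 hp.1
      have hlw : p.1.length = 2 * n := hwp.length_eq.trans hlen
      have hi : p.2 ≤ p.1.length := by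
        have := Finset.mem_range.1 hp.2; omega
      have hmw : m ∉ p.1 := fun h => lt_irrefl m (hnm m (hwp.subset h))
      exact Prod.ext (erase_insertIdx m p.1 p.2 hi hmw) (indexOf_insertIdx m p.1 p.2 hi hmw)
    · intro v hv
      rw [insertIdx_indexOf_erase m v (((hAmem v).1 hv).mem_iff.2 (by simp))]
  have hQ2 : Qpoly n = ∑ w ∈ W, (((des w : Polynomial ℝ) + 1) * X ^ des w
      + (2 * (n : Polynomial ℝ) - (des w : Polynomial ℝ)) * X ^ (des w + 1)) := by
    rw [hQ, hbij, Finset.sum_product]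
    refine Finset.sum_congr rfl ?_
    intro w hw
    have hwp : w.Perm (baseList n) := (hWmem w).1 hw
    have hlw : w.length = 2 * n := hwp.length_eq.trans hlen
    have hall : ∀ a ∈ w, a < m := fun a ha => hnm a (hwp.subset ha)
    have := insert_sum m w hall
    rw [hlw] at this
    rw [this]
    push_cast
    ring
  have hDP : derivative (Ppoly n)
      = ∑ w ∈ W, (Polynomial.C (des w : ℝ) * X ^ (des w - 1)) := by
    rw [hP, Polynomial.derivative_sum]
    exact Finset.sum_congr rfl fun w _ => Polynomial.derivative_X_pow _
  -- Part 1
  have part1 : Qpoly n = ((1 + (2 * (n : Polynomial ℝ) - 1) * X) * Ppoly n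
      + X * (1 - X) * derivative (Ppoly n)) + X * Ppoly n := by
    rw [hQ2, hDP, hP, Finset.mul_sum, Finset.mul_sum, Finset.mul_sum,
      ← Finset.sum_add_distrib, ← Finset.sum_add_distrib]
    exact Finset.sum_congr rfl fun w _ => (per_term n (des w)).symm
  -- Part 2
  have hbase_ne : baseList n ≠ [] := by
    intro h
    have := hlen
    rw [h] at this
    simp at this
    omega
  have part2 : X * Ppoly n =
      (((arrangements (baseList n ++ [m])).filter
          (fun w => w.headI = m)).map (fun w => (X : Polynomial ℝ) ^ des w)).sum := by
    rw [← List.sum_toFinset _ ((nodup_arrangements _).filter _), hP, Finset.mul_sum]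
    refine Finset.sum_nbij' (fun w => m :: w) (fun v => v.tail) ?_ ?_ ?_ ?_ ?_
    · intro w hw
      have hwp : w.Perm (baseList n) := (hWmem w).1 hw
      rw [List.mem_toFinset, List.mem_filter]
      constructor
      · rw [mem_arrangements]
        exact (hwp.cons m).trans (List.perm_append_singleton m (baseList n)).symm
      · simp
    · intro v hv
      rw [List.mem_toFinset, List.mem_filter, mem_arrangements] at hv
      obtain ⟨hvp, hvh⟩ := hv
      have hvne : v ≠ [] := by
        intro h
        rw [h] at hvp
        have := hvp.length_eq
        simp [hlen] at this
      have hvh' : v.headI = m := by simpa using hvh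
      have hcons : m :: v.tail = v := by
        rw [← hvh']
        exact List.cons_head!_tail (by simp [hvne])
      rw [hWmem]
      have : (m :: v.tail).Perm (m :: baseList n) := by
        rw [hcons]
        exact hvp.trans (List.perm_append_singleton m (baseList n))
      exact this.cons_inv
    · intro w _; rfl
    · intro v hv
      rw [List.mem_toFinset, List.mem_filter] at hv
      have hvp : v.Perm (baseList n ++ [m]) := mem_arrangements.1 hv.1
      have hvne : v ≠ [] := by
        intro h
        rw [h] at hvp
        have := hvp.length_eq
        simp [hlen] at this
      have hvh' : v.headI = m := by simpa using hv.2
      rw [← hvh']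
      exact List.cons_head!_tail (by simp [hvne])
    · intro w hw
      have hwp : w.Perm (baseList n) := (hWmem w).1 hw
      have hwne : w ≠ [] := by
        intro h
        rw [h] at hwp
        exact hbase_ne hwp.nil_eq.symm
      rw [des_cons_max m w hwne (fun a ha => hnm a (hwp.subset ha)), pow_succ]
      ring
  -- splitting Q by the head
  have hsplit : Qpoly n =
      (((arrangements (baseList n ++ [m])).filter
          (fun w => w.headI = m)).map (fun w => (X : Polynomial ℝ) ^ des w)).sum
      + (((arrangements (baseList n ++ [m])).filter
          (fun w => w.headI < m)).map (fun w => (X : Polynomial ℝ) ^ des w)).sum := by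
    have hperm := List.filter_append_perm (fun w => decide (w.headI = m))
      (arrangements (baseList n ++ [m]))
    have hsum := ((hperm.map (fun w => (X : Polynomial ℝ) ^ des w)).sum_eq)
    rw [List.map_append, List.sum_append] at hsum
    have hfeq : (arrangements (baseList n ++ [m])).filter
        (fun w => !decide (w.headI = m))
        = (arrangements (baseList n ++ [m])).filter (fun w => decide (w.headI < m)) := by
      refine List.filter_congr ?_
      intro v hv
      have hvp : v.Perm (baseList n ++ [m]) := mem_arrangements.1 hv
      have hvne : v ≠ [] := by
        intro h
        rw [h] at hvp
        have := hvp.length_eq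
        simp [hlen] at this
      have hmem : v.headI ∈ baseList n ++ [m] := by
        obtain ⟨c, t, rfl⟩ := List.exists_cons_of_ne_nil hvne
        exact hvp.subset (by simp)
      have hle : v.headI = m ∨ v.headI < m := by
        rcases List.mem_append.1 hmem with h | h
        · exact Or.inr (hnm _ h)
        · simp at h; exact Or.inl h
      rcases hle with h | h
      · simp [h]
      · simp [h, ne_of_lt h]
    rw [Qpoly, desPoly, ← hsum, hfeq]
  exact ⟨part1, part2, by linear_combination hsplit - part1 - part2⟩
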